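/- Let K be a field with more than 2 elements and let λ ∈ K with λ ≠ 0 and λ ≠ 1. Then every matrix in GL_3(K) is a finite product of matrices each of which is conjugate to diag(μ,1,1) for some μ ∈ K \ {0,1}. -/

import Mathlib

open Matrix

section Aux
variable {K : Type*} [Field K]

private def GoodM (A : Matrix (Fin 3) (Fin 3) K) : Prop :=
  ∃ (μ : K) (P : Matrix (Fin 3) (Fin 3) K), μ ≠ 0 ∧ μ ≠ 1 ∧ IsUnit P ∧
    A = P * Matrix.diagonal ![μ, 1, 1] * P⁻¹

private def GenM (M : Matrix (Fin 3) (Fin 3) K) : Prop :=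
  ∃ l : List (Matrix (Fin 3) (Fin 3) K), l ≠ [] ∧ (∀ A ∈ l, GoodM A) ∧ l.prod = M

private lemma GoodM.gen {A : Matrix (Fin 3) (Fin 3) K} (h : GoodM A) : GenM A :=
  ⟨[A], by simp, by simpa using h, by simp⟩

private lemma GenM.mul {A B : Matrix (Fin 3) (Fin 3) K} (hA : GenM A) (hB : GenM B) :
    GenM (A * B) := by
  obtain ⟨l₁, h₁, g₁, p₁⟩ := hA
  obtain ⟨l₂, h₂, g₂, p₂⟩ := hB
  exact ⟨l₁ ++ l₂, by simp [h₁], by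
    intro X hX; rcases List.mem_append.1 hX with h | h
    · exact g₁ X h
    · exact g₂ X h, by rw [List.prod_append, p₁, p₂]⟩

private lemma GoodM.conj {A : Matrix (Fin 3) (Fin 3) K} (h : GoodM A)
    {Q : Matrix (Fin 3) (Fin 3) K} (hQ : IsUnit Q) : GoodM (Q * A * Q⁻¹) := by
  obtain ⟨μ, P, h0, h1, hP, rfl⟩ := h
  refine ⟨μ, Q * P, h0, h1, hQ.mul hP, ?_⟩
  rw [Matrix.mul_inv_rev]
  simp [Matrix.mul_assoc]

private lemma good_d0 {μ : K} (h0 : μ ≠ 0) (h1 : μ ≠ 1) :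
    GoodM (Matrix.diagonal ![μ, 1, 1]) :=
  ⟨μ, 1, h0, h1, isUnit_one, by simp⟩

private lemma good_d1 {μ : K} (h0 : μ ≠ 0) (h1 : μ ≠ 1) :
    GoodM (Matrix.diagonal ![1, μ, 1]) := by
  set Q : Matrix (Fin 3) (Fin 3) K := !![0,1,0;1,0,0;0,0,1] with hQdef
  have hQQ : Q * Q = 1 := by
    ext a b
    fin_cases a <;> fin_cases b <;>
      simp [hQdef, Matrix.mul_apply, Matrix.vecMul, dotProduct, Fin.sum_univ_succ]
  have hQinv : Q⁻¹ = Q := Matrix.inv_eq_right_inv hQQ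
  refine ⟨μ, Q, h0, h1, ⟨⟨Q, Q, hQQ, hQQ⟩, rfl⟩, ?_⟩
  rw [hQinv]
  ext a b
  fin_cases a <;> fin_cases b <;>
    simp [hQdef, Matrix.mul_apply, Matrix.vecMul, dotProduct, Fin.sum_univ_succ, Matrix.diagonal_apply]

private lemma good_d2 {μ : K} (h0 : μ ≠ 0) (h1 : μ ≠ 1) :
    GoodM (Matrix.diagonal ![1, 1, μ]) := by
  set Q : Matrix (Fin 3) (Fin 3) K := !![0,0,1;0,1,0;1,0,0] with hQdef
  have hQQ : Q * Q = 1 := by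
    ext a b
    fin_cases a <;> fin_cases b <;>
      simp [hQdef, Matrix.mul_apply, Matrix.vecMul, dotProduct, Fin.sum_univ_succ]
  have hQinv : Q⁻¹ = Q := Matrix.inv_eq_right_inv hQQ
  refine ⟨μ, Q, h0, h1, ⟨⟨Q, Q, hQQ, hQQ⟩, rfl⟩, ?_⟩
  rw [hQinv]
  ext a b
  fin_cases a <;> fin_cases b <;>
    simp [hQdef, Matrix.mul_apply, Matrix.vecMul, dotProduct, Fin.sum_univ_succ, Matrix.diagonal_apply]

private lemma good_dmat (i : Fin 3) {μ : K} (h0 : μ ≠ 0) (h1 : μ ≠ 1) :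
    GoodM (1 + Matrix.single i i (μ - 1)) := by
  fin_cases i
  · have : (1 + Matrix.single (0 : Fin 3) 0 (μ - 1) : Matrix (Fin 3) (Fin 3) K)
        = Matrix.diagonal ![μ, 1, 1] := by
      ext a b
      fin_cases a <;> fin_cases b <;> simp [Matrix.single, Matrix.diagonal_apply, Matrix.one_apply]
    show GoodM (1 + Matrix.single (0 : Fin 3) (0 : Fin 3) (μ - 1))
    rw [this]; exact good_d0 h0 h1
  · have : (1 + Matrix.single (1 : Fin 3) 1 (μ - 1) : Matrix (Fin 3) (Fin 3) K)
        = Matrix.diagonal ![1, μ, 1] := by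
      ext a b
      fin_cases a <;> fin_cases b <;> simp [Matrix.single, Matrix.diagonal_apply, Matrix.one_apply]
    show GoodM (1 + Matrix.single (1 : Fin 3) (1 : Fin 3) (μ - 1))
    rw [this]; exact good_d1 h0 h1
  · have : (1 + Matrix.single (2 : Fin 3) 2 (μ - 1) : Matrix (Fin 3) (Fin 3) K)
        = Matrix.diagonal ![1, 1, μ] := by
      ext a b
      fin_cases a <;> fin_cases b <;> simp [Matrix.single, Matrix.diagonal_apply, Matrix.one_apply]
    show GoodM (1 + Matrix.single (2 : Fin 3) (2 : Fin 3) (μ - 1))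
    rw [this]; exact good_d2 h0 h1

private lemma key_expand (i j : Fin 3) (hij : i ≠ j) (u v a b : K) :
    (1 + Matrix.single i i u) * (1 + Matrix.single i j a) * (1 + Matrix.single i i v)
      * (1 + Matrix.single i j b)
    = 1 + Matrix.single i i (u + v + u*v)
        + Matrix.single i j (a + b + u*a + u*b + v*b + u*v*b) := by
  simp only [mul_add, add_mul, one_mul, mul_one, Matrix.single_mul_single_same,
    (fun (l : Fin 3) (x y : K) => (Matrix.single_mul_single_of_ne x i j i hij.symm y :
      Matrix.single i j x * Matrix.single i l y = 0)), mul_zero, zero_mul,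
    add_zero, zero_add]
  ring_nf
  simp only [Matrix.single_add]
  abel

private lemma gen_one (lam : K) (hl0 : lam ≠ 0) (hl1 : lam ≠ 1) :
    GenM (1 : Matrix (Fin 3) (Fin 3) K) := by
  have hli0 : lam⁻¹ ≠ 0 := inv_ne_zero hl0
  have hli1 : lam⁻¹ ≠ 1 := by
    rw [Ne, inv_eq_one]; exact hl1
  have h : (Matrix.diagonal ![lam, 1, 1] * Matrix.diagonal ![lam⁻¹, 1, 1]
      : Matrix (Fin 3) (Fin 3) K) = 1 := by
    ext a b
    fin_cases a <;> fin_cases b <;>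
      simp [Matrix.mul_apply, Matrix.vecMul, dotProduct, Fin.sum_univ_succ, Matrix.diagonal_apply, Matrix.one_apply,
        mul_inv_cancel₀ hl0]
  exact h ▸ (good_d0 hl0 hl1).gen.mul (good_d0 hli0 hli1).gen

private lemma gen_transvection (lam : K) (hl0 : lam ≠ 0) (hl1 : lam ≠ 1)
    (i j : Fin 3) (hij : i ≠ j) (c : K) :
    GenM (Matrix.transvection i j c : Matrix (Fin 3) (Fin 3) K) := by
  have hli0 : lam⁻¹ ≠ 0 := inv_ne_zero hl0
  have hli1 : lam⁻¹ ≠ 1 := by rw [Ne, inv_eq_one]; exact hl1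
  have hsub : lam - 1 ≠ 0 := sub_ne_zero.2 hl1
  set α : K := c / (lam - 1) with hα
  set Q : Matrix (Fin 3) (Fin 3) K := Matrix.transvection i j α with hQdef
  have hQQ : Q * Matrix.transvection i j (-α) = 1 := by
    rw [hQdef, Matrix.transvection_mul_transvection_same (h := hij)]
    simp [Matrix.transvection]
  have hQinv : Q⁻¹ = Matrix.transvection i j (-α) := Matrix.inv_eq_right_inv hQQ
  have hQunit : IsUnit Q := by
    rw [Matrix.isUnit_iff_isUnit_det, hQdef, Matrix.det_transvection_of_ne i j hij]
    exact isUnit_one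
  have hgood2 : GoodM (Q * (1 + Matrix.single i i (lam⁻¹ - 1)) * Q⁻¹) :=
    (good_dmat i hli0 hli1).conj hQunit
  have hprod : (1 + Matrix.single i i (lam - 1))
      * (Q * (1 + Matrix.single i i (lam⁻¹ - 1)) * Q⁻¹)
      = Matrix.transvection i j c := by
    rw [hQinv, hQdef]
    simp only [Matrix.transvection]
    rw [show (1 + Matrix.single i i (lam - 1))
        * (((1 : Matrix (Fin 3) (Fin 3) K) + Matrix.single i j α)
          * (1 + Matrix.single i i (lam⁻¹ - 1)) * (1 + Matrix.single i j (-α)))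
      = (1 + Matrix.single i i (lam - 1)) * (1 + Matrix.single i j α)
          * (1 + Matrix.single i i (lam⁻¹ - 1)) * (1 + Matrix.single i j (-α)) by
        simp only [Matrix.mul_assoc]]
    rw [key_expand i j hij]
    have h1 : (lam - 1) + (lam⁻¹ - 1) + (lam - 1) * (lam⁻¹ - 1) = 0 := by
      field_simp
      ring
    have h2 : α + -α + (lam - 1) * α + (lam - 1) * (-α) + (lam⁻¹ - 1) * (-α)
        + (lam - 1) * (lam⁻¹ - 1) * (-α) = c := by
      rw [hα]
      field_simp
      ring
    rw [h1, h2]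
    simp
  rw [← hprod]
  exact (good_dmat i hl0 hl1).gen.mul hgood2.gen

private lemma gen_diag (lam : K) (hl0 : lam ≠ 0) (hl1 : lam ≠ 1)
    (D : Fin 3 → K) (hD : ∀ k, D k ≠ 0) : GenM (Matrix.diagonal D) := by
  have gen_entry : ∀ (d : Matrix (Fin 3) (Fin 3) K), GoodM d ∨ d = 1 → GenM d := by
    rintro d (h | rfl)
    · exact h.gen
    · exact gen_one lam hl0 hl1
  have h0 : GenM (Matrix.diagonal ![D 0, 1, 1] : Matrix (Fin 3) (Fin 3) K) := by
    by_cases h : D 0 = 1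
    · exact gen_entry _ (Or.inr (by rw [h]; ext a b; fin_cases a <;> fin_cases b <;>
        simp [Matrix.diagonal, Matrix.one_apply]))
    · exact gen_entry _ (Or.inl (good_d0 (hD 0) h))
  have h1 : GenM (Matrix.diagonal ![1, D 1, 1] : Matrix (Fin 3) (Fin 3) K) := by
    by_cases h : D 1 = 1
    · exact gen_entry _ (Or.inr (by rw [h]; ext a b; fin_cases a <;> fin_cases b <;>
        simp [Matrix.diagonal, Matrix.one_apply]))
    · exact gen_entry _ (Or.inl (good_d1 (hD 1) h))
  have h2 : GenM (Matrix.diagonal ![1, 1, D 2] : Matrix (Fin 3) (Fin 3) K) := by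
    by_cases h : D 2 = 1
    · exact gen_entry _ (Or.inr (by rw [h]; ext a b; fin_cases a <;> fin_cases b <;>
        simp [Matrix.diagonal, Matrix.one_apply]))
    · exact gen_entry _ (Or.inl (good_d2 (hD 2) h))
  have heq : Matrix.diagonal D
      = Matrix.diagonal ![D 0, 1, 1] * Matrix.diagonal ![1, D 1, 1]
        * Matrix.diagonal ![1, 1, D 2] := by
    ext a b
    fin_cases a <;> fin_cases b <;>
      simp [Matrix.mul_apply, Matrix.vecMul, dotProduct, Fin.sum_univ_succ, Matrix.diagonal_apply]
  rw [heq]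
  exact (h0.mul h1).mul h2

end Aux

theorem GL3_generated_by_diagonalizable_conjugates (K : Type*) [Field K]
    (lam : K) (hl0 : lam ≠ 0) (hl1 : lam ≠ 1)
    (M : Matrix (Fin 3) (Fin 3) K) (hM : IsUnit M) :
    ∃ l : List (Matrix (Fin 3) (Fin 3) K), l ≠ [] ∧
      (∀ A ∈ l, ∃ (μ : K) (P : Matrix (Fin 3) (Fin 3) K), μ ≠ 0 ∧ μ ≠ 1 ∧ IsUnit P ∧
        A = P * Matrix.diagonal ![μ, 1, 1] * P⁻¹) ∧ l.prod = M := by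
  have hdet : Matrix.det M ≠ 0 := by
    have := (Matrix.isUnit_iff_isUnit_det M).1 hM
    exact isUnit_iff_ne_zero.1 this
  have : GenM M := by
    apply Matrix.diagonal_transvection_induction_of_det_ne_zero _ M hdet
    · intro D hD
      apply gen_diag lam hl0 hl1
      intro k
      rw [Matrix.det_diagonal] at hD
      exact Finset.prod_ne_zero_iff.1 hD k (Finset.mem_univ k)
    · rintro ⟨i, j, hij, c⟩
      simpa [Matrix.TransvectionStruct.toMatrix] using gen_transvection lam hl0 hl1 i j hij c
    · intro A B _ _ hA hB
      exact hA.mul hB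
  obtain ⟨l, hne, hgood, hprod⟩ := this
  exact ⟨l, hne, fun A hA => hgood A hA, hprod⟩
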